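/- Under the action of G' on ℝ³ by matrix–vector multiplication, the orbit of S_1 = (0,0,1) is exactly the two-point set {S_1, S_6} where S_6 = (0,0,−1), and the stabilizer {σ ∈ G' : σ·S_1 = S_1} has exactly 8 elements. (By the Orbit–Stabiliser Theorem this gives |G'| = 2·8 = 16.) -/

import Mathlib

open Matrix

/-- The matrix `σ'₂` with rows `(1/√2, 1/√2, 0), (−1/√2, 1/√2, 0), (0, 0, −1)`. -/
noncomputable def sigma2' : Matrix (Fin 3) (Fin 3) ℝ :=
  !![1 / Real.sqrt 2, 1 / Real.sqrt 2, 0;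
     -(1 / Real.sqrt 2), 1 / Real.sqrt 2, 0;
     0, 0, -1]

/-- The matrix `σ' = diag(1, −1, 1)`. -/
def sigma' : Matrix (Fin 3) (Fin 3) ℝ := !![1, 0, 0; 0, -1, 0; 0, 0, 1]

/-- `G'`: the subgroup of `GL(3,ℝ)` generated by `σ'₂` and `σ'`. -/
noncomputable def G' : Subgroup (GL (Fin 3) ℝ) :=
  Subgroup.closure {g | (↑g : Matrix (Fin 3) (Fin 3) ℝ) = sigma2' ∨
    (↑g : Matrix (Fin 3) (Fin 3) ℝ) = sigma'}

namespace Stmt11Aux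

noncomputable def s2inv : Matrix (Fin 3) (Fin 3) ℝ :=
  !![1 / Real.sqrt 2, -(1 / Real.sqrt 2), 0;
     1 / Real.sqrt 2, 1 / Real.sqrt 2, 0;
     0, 0, -1]

def c0 : Matrix (Fin 3) (Fin 3) ℝ := !![0, 1, 0; -1, 0, 0; 0, 0, 1]

lemma hs2 : Real.sqrt 2 * Real.sqrt 2 = 2 := Real.mul_self_sqrt (by norm_num)
lemma hs0 : Real.sqrt 2 ≠ 0 := by positivity

lemma s2_mul_inv : sigma2' * s2inv = 1 := by
  have h2 := hs2; have h0 := hs0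
  ext i j
  fin_cases i <;> fin_cases j <;>
    simp [sigma2', s2inv, Matrix.mul_apply, Fin.sum_univ_three, Matrix.one_apply,
      Matrix.vecHead, Matrix.vecTail] <;> field_simp <;> nlinarith [h2]

lemma inv_mul_s2 : s2inv * sigma2' = 1 := by
  have h2 := hs2; have h0 := hs0
  ext i j
  fin_cases i <;> fin_cases j <;>
    simp [sigma2', s2inv, Matrix.mul_apply, Fin.sum_univ_three, Matrix.one_apply,
      Matrix.vecHead, Matrix.vecTail] <;> field_simp <;> nlinarith [h2]

lemma sp2 : sigma' * sigma' = 1 := by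
  ext i j
  fin_cases i <;> fin_cases j <;>
    simp [sigma', Matrix.mul_apply, Fin.sum_univ_three, Matrix.one_apply,
      Matrix.vecHead, Matrix.vecTail]

noncomputable def A : GL (Fin 3) ℝ := ⟨sigma2', s2inv, s2_mul_inv, inv_mul_s2⟩
def B : GL (Fin 3) ℝ := ⟨sigma', sigma', sp2, sp2⟩

lemma A_mem : A ∈ G' := Subgroup.subset_closure (Or.inl rfl)
lemma B_mem : B ∈ G' := Subgroup.subset_closure (Or.inr rfl)

lemma hA2 : sigma2' * sigma2' = c0 := by
  have h2 := hs2; have h0 := hs0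
  ext i j
  fin_cases i <;> fin_cases j <;>
    simp [sigma2', c0, Matrix.mul_apply, Fin.sum_univ_three,
      Matrix.vecHead, Matrix.vecTail] <;> field_simp <;> nlinarith [h2]

lemma hA8m : sigma2' ^ 8 = 1 := by
  have h : sigma2' ^ 8 = (sigma2' ^ 2) ^ 4 := by rw [← pow_mul]
  rw [h, pow_two, hA2]
  ext i j
  fin_cases i <;> fin_cases j <;>
    norm_num [c0, pow_succ, Matrix.mul_apply, Fin.sum_univ_three, Matrix.one_apply,
      Matrix.vecHead, Matrix.vecTail, Fin.ext_iff, Matrix.cons_val_two]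

lemma hA8 : A ^ 8 = 1 := by
  ext : 1
  rw [Units.val_pow_eq_pow_val]
  exact hA8m

lemma hB2 : B * B = 1 := by
  ext : 1
  exact sp2

lemma Binv : B⁻¹ = B := inv_eq_of_mul_eq_one_right hB2

lemma hBABm : sigma' * sigma2' * sigma' = s2inv := by
  ext i j
  fin_cases i <;> fin_cases j <;>
    simp [sigma', sigma2', s2inv, Matrix.mul_apply, Fin.sum_univ_three,
      Matrix.vecHead, Matrix.vecTail]

lemma Ainv_coe : ((A⁻¹ : GL (Fin 3) ℝ) : Matrix (Fin 3) (Fin 3) ℝ) = s2inv := rfl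

lemma hBAB : B * A * B⁻¹ = A⁻¹ := by
  rw [Binv]
  exact Units.ext hBABm

lemma hBA (i : ℤ) : B * A ^ i = A ^ (-i) * B := by
  have h := map_zpow (MulAut.conj B) A i
  rw [MulAut.conj_apply, MulAut.conj_apply, hBAB, _root_.inv_zpow, ← _root_.zpow_neg] at h
  calc B * A ^ i = B * A ^ i * B⁻¹ * B := by group
    _ = A ^ (-i) * B := by rw [h]

lemma struct : ∀ g ∈ G', ∃ (i : ℤ) (ε : Bool), g = A ^ i * (cond ε B 1) := by
  intro g hg
  refine Subgroup.closure_induction ?_ ?_ ?_ ?_ hg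
  · rintro x (hx | hx)
    · exact ⟨1, false, by rw [Units.ext (show (↑x : Matrix (Fin 3) (Fin 3) ℝ) = ↑A from hx)]; simp⟩
    · exact ⟨0, true, by rw [Units.ext (show (↑x : Matrix (Fin 3) (Fin 3) ℝ) = ↑B from hx)]; simp⟩
  · exact ⟨0, false, by simp⟩
  · rintro x y _ _ ⟨i, ε, rfl⟩ ⟨j, δ, rfl⟩
    cases ε
    · refine ⟨i + j, δ, ?_⟩
      simp only [Bool.cond_false, mul_one]
      group
    · cases δ
      · refine ⟨i - j, true, ?_⟩
        simp only [Bool.cond_false, Bool.cond_true, mul_one]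
        calc A ^ i * B * A ^ j = A ^ i * (B * A ^ j) := by group
          _ = A ^ i * (A ^ (-j) * B) := by rw [hBA]
          _ = A ^ (i - j) * B := by group
      · refine ⟨i - j, false, ?_⟩
        simp only [Bool.cond_false, Bool.cond_true, mul_one]
        calc A ^ i * B * (A ^ j * B) = A ^ i * (B * A ^ j) * B := by group
          _ = A ^ i * (A ^ (-j) * B) * B := by rw [hBA]
          _ = A ^ i * A ^ (-j) * (B * B) := by group
          _ = A ^ i * A ^ (-j) * 1 := by rw [hB2]
          _ = A ^ (i - j) := by group
  · rintro x _ ⟨i, ε, rfl⟩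
    cases ε
    · refine ⟨-i, false, ?_⟩
      simp only [Bool.cond_false, mul_one]
      group
    · refine ⟨i, true, ?_⟩
      simp only [Bool.cond_true]
      calc (A ^ i * B)⁻¹ = B⁻¹ * (A ^ i)⁻¹ := by group
        _ = B * A ^ (-i) := by rw [Binv]; group
        _ = A ^ i * B := by rw [hBA]; group

lemma s2_vec : sigma2'.mulVec ![0, 0, 1] = ![0, 0, -1] := by
  funext i
  fin_cases i <;>
    simp [sigma2', Matrix.mulVec, dotProduct, Fin.sum_univ_three,
      Matrix.vecHead, Matrix.vecTail]

lemma s2inv_vec : s2inv.mulVec ![0, 0, 1] = ![0, 0, -1] := by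
  funext i
  fin_cases i <;>
    simp [s2inv, Matrix.mulVec, dotProduct, Fin.sum_univ_three,
      Matrix.vecHead, Matrix.vecTail]

lemma sp_vec : sigma'.mulVec ![0, 0, 1] = ![0, 0, 1] := by
  funext i
  fin_cases i <;>
    simp [sigma', Matrix.mulVec, dotProduct, Fin.sum_univ_three,
      Matrix.vecHead, Matrix.vecTail]

lemma neg_e3 : ((-1 : ℝ) • ![(0:ℝ), 0, 1]) = ![(0:ℝ), 0, -1] := by
  funext i
  fin_cases i <;> simp

lemma Apow_vec (i : ℤ) :
    ((A ^ i : GL (Fin 3) ℝ) : Matrix (Fin 3) (Fin 3) ℝ).mulVec ![0, 0, 1]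
      = ((-1 : ℝ) ^ i) • ![0, 0, 1] := by
  induction i using Int.induction_on with
  | zero => simp [Matrix.one_mulVec]
  | succ n ih =>
      have h : A ^ ((n : ℤ) + 1) = A * A ^ (n : ℤ) := by
        rw [show (n : ℤ) + 1 = 1 + n by ring, _root_.zpow_add, zpow_one]
      rw [h, Units.val_mul, ← Matrix.mulVec_mulVec, ih, Matrix.mulVec_smul]
      show ((-1 : ℝ) ^ (n : ℤ)) • sigma2'.mulVec ![0, 0, 1] = _
      rw [s2_vec, ← neg_e3, smul_smul,
        show (n : ℤ) + 1 = 1 + n by ring,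
        zpow_add₀ (by norm_num : (-1 : ℝ) ≠ 0), zpow_one]
      ring_nf
  | pred n ih =>
      have h : A ^ (-(n : ℤ) - 1) = A⁻¹ * A ^ (-(n : ℤ)) := by
        rw [show -(n : ℤ) - 1 = -1 + -n by ring, _root_.zpow_add, _root_.zpow_neg_one]
      rw [h, Units.val_mul, ← Matrix.mulVec_mulVec, ih, Matrix.mulVec_smul, Ainv_coe,
        s2inv_vec, ← neg_e3, smul_smul,
        show -(n : ℤ) - 1 = -1 + -(n : ℤ) by ring,
        zpow_add₀ (by norm_num : (-1 : ℝ) ≠ 0)]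
      norm_num

lemma w_vec (i : ℤ) (ε : Bool) :
    ((A ^ i * cond ε B 1 : GL (Fin 3) ℝ) : Matrix (Fin 3) (Fin 3) ℝ).mulVec ![0, 0, 1]
      = ((-1 : ℝ) ^ i) • ![0, 0, 1] := by
  cases ε
  · simpa using Apow_vec i
  · rw [Units.val_mul, ← Matrix.mulVec_mulVec]
    show ((A ^ i : GL (Fin 3) ℝ) : Matrix (Fin 3) (Fin 3) ℝ).mulVec
      (sigma'.mulVec ![0, 0, 1]) = _
    rw [sp_vec, Apow_vec]

lemma even_zpow {i : ℤ} (h : Even i) : ((-1 : ℝ) ^ i) = 1 := by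
  obtain ⟨j, rfl⟩ := h
  rw [zpow_add₀ (by norm_num : (-1 : ℝ) ≠ 0), ← mul_zpow]
  norm_num

lemma odd_zpow {i : ℤ} (h : Odd i) : ((-1 : ℝ) ^ i) = -1 := by
  obtain ⟨j, rfl⟩ := h
  rw [zpow_add₀ (by norm_num : (-1 : ℝ) ≠ 0), even_zpow ⟨j, by ring⟩]
  norm_num


lemma w_mem (i : ℤ) (ε : Bool) : A ^ i * cond ε B 1 ∈ G' := by
  refine mul_mem (zpow_mem A_mem i) ?_
  cases ε
  · exact one_mem _
  · exact B_mem

noncomputable def St : Set ↥G' :=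
  {g : G' | (↑(↑g : GL (Fin 3) ℝ) : Matrix (Fin 3) (Fin 3) ℝ).mulVec
      ![0, 0, 1] = ![0, 0, 1]}

noncomputable def f (p : Fin 4 × Bool) : St :=
  ⟨⟨A ^ ((2 * (p.1 : ℕ) : ℕ) : ℤ) * cond p.2 B 1, w_mem _ _⟩, by
    show ((A ^ ((2 * (p.1 : ℕ) : ℕ) : ℤ) * cond p.2 B 1 : GL (Fin 3) ℝ) :
        Matrix (Fin 3) (Fin 3) ℝ).mulVec ![0, 0, 1] = ![0, 0, 1]
    rw [w_vec, even_zpow ⟨((p.1 : ℕ) : ℤ), by push_cast; ring⟩, one_smul]⟩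

lemma val_f (n : ℕ) (ε : Bool) :
    ((A ^ ((2 * n : ℕ) : ℤ) * cond ε B 1 : GL (Fin 3) ℝ) : Matrix (Fin 3) (Fin 3) ℝ)
      = c0 ^ n * (cond ε sigma' 1) := by
  rw [zpow_natCast, Units.val_mul, Units.val_pow_eq_pow_val]
  congr 1
  · show sigma2' ^ (2 * n) = c0 ^ n
    rw [pow_mul, pow_two, hA2]
  · cases ε <;> rfl

lemma hc2 : (!![0, 1, 0; -1, 0, 0; 0, 0, 1] : Matrix (Fin 3) (Fin 3) ℝ) ^ 2
    = !![-1, 0, 0; 0, -1, 0; 0, 0, 1] := by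
  rw [pow_two]
  ext i j
  fin_cases i <;> fin_cases j <;>
    norm_num [c0, Matrix.mul_apply, Fin.sum_univ_three, Matrix.vecHead, Matrix.vecTail, Matrix.cons_val_two]

lemma hc3 : (!![0, 1, 0; -1, 0, 0; 0, 0, 1] : Matrix (Fin 3) (Fin 3) ℝ) ^ 3
    = !![0, -1, 0; 1, 0, 0; 0, 0, 1] := by
  have h3 : (!![0, 1, 0; -1, 0, 0; 0, 0, 1] : Matrix (Fin 3) (Fin 3) ℝ) ^ 3
      = (!![0, 1, 0; -1, 0, 0; 0, 0, 1] : Matrix (Fin 3) (Fin 3) ℝ) ^ 2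
        * !![0, 1, 0; -1, 0, 0; 0, 0, 1] := pow_succ _ 2
  rw [h3, hc2]
  ext i j
  fin_cases i <;> fin_cases j <;>
    norm_num [c0, Matrix.mul_apply, Fin.sum_univ_three, Matrix.vecHead, Matrix.vecTail, Matrix.cons_val_two]

set_option maxHeartbeats 1000000 in
lemma key : ∀ (a b : ℕ), a < 4 → b < 4 → ∀ (ε ε' : Bool),
    c0 ^ a * (cond ε sigma' 1) = c0 ^ b * (cond ε' sigma' 1) →
      a = b ∧ ε = ε' := by
  intro a b ha hb ε ε' h
  interval_cases a <;> interval_cases b <;> cases ε <;> cases ε' <;>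
    first
      | exact ⟨rfl, rfl⟩
      | (have h00 := congrFun (congrFun h 0) 0
         norm_num [c0, sigma', hc2, hc3, pow_zero, pow_one, Matrix.mul_apply,
           Fin.sum_univ_three, Matrix.one_apply, Matrix.vecHead, Matrix.vecTail,
           Matrix.cons_val_two] at h00
         done)
      | (have h01 := congrFun (congrFun h 0) 1
         norm_num [c0, sigma', hc2, hc3, pow_zero, pow_one, Matrix.mul_apply,
           Fin.sum_univ_three, Matrix.one_apply, Matrix.vecHead, Matrix.vecTail,
           Matrix.cons_val_two] at h01
         done)
      | (have h10 := congrFun (congrFun h 1) 0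
         norm_num [c0, sigma', hc2, hc3, pow_zero, pow_one, Matrix.mul_apply,
           Fin.sum_univ_three, Matrix.one_apply, Matrix.vecHead, Matrix.vecTail,
           Matrix.cons_val_two] at h10
         done)
      | (have h11 := congrFun (congrFun h 1) 1
         norm_num [c0, sigma', hc2, hc3, pow_zero, pow_one, Matrix.mul_apply,
           Fin.sum_univ_three, Matrix.one_apply, Matrix.vecHead, Matrix.vecTail,
           Matrix.cons_val_two] at h11
         done)

lemma f_inj : Function.Injective f := by
  rintro ⟨r, ε⟩ ⟨r', ε'⟩ h
  have h2 : ((A ^ ((2 * (r : ℕ) : ℕ) : ℤ) * cond ε B 1 : GL (Fin 3) ℝ) :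
        Matrix (Fin 3) (Fin 3) ℝ)
      = ((A ^ ((2 * (r' : ℕ) : ℕ) : ℤ) * cond ε' B 1 : GL (Fin 3) ℝ) :
        Matrix (Fin 3) (Fin 3) ℝ) :=
    congrArg (fun x : St => ((↑(↑x : ↥G') : GL (Fin 3) ℝ) : Matrix (Fin 3) (Fin 3) ℝ)) h
  rw [val_f, val_f] at h2
  obtain ⟨h3, h4⟩ := key _ _ r.isLt r'.isLt _ _ h2
  exact Prod.ext (Fin.ext h3) h4

lemma f_surj : Function.Surjective f := by
  rintro ⟨⟨g, hg⟩, hfix⟩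
  obtain ⟨i, ε, hw⟩ := struct g hg
  have hfix' : (↑g : Matrix (Fin 3) (Fin 3) ℝ).mulVec ![0, 0, 1] = ![0, 0, 1] := hfix
  have hv : ((-1 : ℝ) ^ i) • ![(0:ℝ), 0, 1] = ![(0:ℝ), 0, 1] := by
    rw [← w_vec i ε, ← hw]; exact hfix'
  have h1 : ((-1 : ℝ) ^ i) = 1 := by
    have := congrFun hv 2
    simpa using this
  have hev : Even i := by
    rcases Int.even_or_odd i with he | ho
    · exact he
    · rw [odd_zpow ho] at h1; norm_num at h1
  obtain ⟨k, hk⟩ := hev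
  refine ⟨(⟨(k % 4).toNat, by omega⟩, ε), ?_⟩
  have hiA : A ^ i = A ^ ((2 * ((k % 4).toNat) : ℕ) : ℤ) := by
    have e1 : i = 8 * (k / 4) + ((2 * ((k % 4).toNat) : ℕ) : ℤ) := by push_cast; omega
    rw [e1, _root_.zpow_add, _root_.zpow_mul,
      show ((8 : ℤ)) = ((8 : ℕ) : ℤ) by norm_num, zpow_natCast, hA8, _root_.one_zpow, one_mul]
  apply Subtype.ext
  apply Subtype.ext
  show A ^ ((2 * (((⟨(k % 4).toNat, by omega⟩ : Fin 4)) : ℕ) : ℕ) : ℤ) * cond ε B 1 = g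
  rw [hw, hiA]

lemma card_St : Nat.card St = 8 := by
  have hbij : Function.Bijective f := ⟨f_inj, f_surj⟩
  rw [← Nat.card_congr (Equiv.ofBijective f hbij)]
  simp [Nat.card_eq_fintype_card]

end Stmt11Aux

open Stmt11Aux in
/-- The orbit of `S_1 = (0,0,1)` under `G'` is exactly `{S_1, S_6}` with
`S_6 = (0,0,−1)`, and the stabilizer of `S_1` in `G'` has exactly `8` elements
(so `|G'| = 2 · 8 = 16` by the Orbit–Stabiliser Theorem). -/
theorem stmt_11 :
    {v : Fin 3 → ℝ | ∃ g ∈ G', (↑g : Matrix (Fin 3) (Fin 3) ℝ).mulVec ![0, 0, 1] = v}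
      = {![0, 0, 1], ![0, 0, -1]} ∧
    Nat.card {g : G' | (↑(↑g : GL (Fin 3) ℝ) : Matrix (Fin 3) (Fin 3) ℝ).mulVec
      ![0, 0, 1] = ![0, 0, 1]} = 8 := by
  constructor
  · ext v
    simp only [Set.mem_setOf_eq, Set.mem_insert_iff, Set.mem_singleton_iff]
    constructor
    · rintro ⟨g, hg, rfl⟩
      obtain ⟨i, ε, rfl⟩ := struct g hg
      rw [w_vec]
      rcases Int.even_or_odd i with he | ho
      · left; rw [even_zpow he, one_smul]
      · right; rw [odd_zpow ho, neg_e3]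
    · rintro (rfl | rfl)
      · exact ⟨1, one_mem _, by simp [Matrix.one_mulVec]⟩
      · exact ⟨A, A_mem, s2_vec⟩
  · exact card_St
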